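/- Let R > 0 and let f : [0, R) → ℝ be twice continuously differentiable with f(0) = 0, f'(0) = −1, and f' convex and strictly increasing. Set ν := sup{t ∈ [0, R) : f'(t) < 0}, n_f(t) := t − f(t)/f'(t) for t ∈ [0, ν), and ρ := sup{t ∈ (0, ν) : f(t)/(t f'(t)) − 1 < 1}. Then ρ > 0, and |n_f(t)| < t for all t ∈ (0, ρ). -/

import Mathlib

set_option maxHeartbeats 800000


open RealInnerProductSpace Filter Metric Set

/-- Tangent line inequality for a convex differentiable function. -/
lemma tangent_line_le {R : ℝ} {f' f'' : ℝ → ℝ}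
    (hfd2 : ∀ t ∈ Set.Ico (0 : ℝ) R, HasDerivWithinAt f' (f'' t) (Set.Ico (0 : ℝ) R) t)
    (hfconv : ConvexOn ℝ (Set.Ico (0 : ℝ) R) f')
    {x y : ℝ} (hx : x ∈ Set.Ico (0 : ℝ) R) (hy : y ∈ Set.Ico (0 : ℝ) R) :
    f' x + f'' x * (y - x) ≤ f' y := by
  rcases lt_trichotomy x y with h | h | h
  · have hs := hfconv.le_slope_of_hasDerivWithinAt hx hy h (hfd2 x hx)
    rw [slope_def_field] at hs
    rw [le_div_iff₀ (by linarith)] at hs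
    linarith
  · subst h; simp
  · have hs := hfconv.slope_le_of_hasDerivWithinAt hy hx h (hfd2 x hx)
    rw [slope_def_field] at hs
    rw [div_le_iff₀ (by linarith)] at hs
    linarith

theorem rho_pos_and_newton_map_contraction (R : ℝ) (hR : 0 < R)
    (f f' f'' : ℝ → ℝ)
    (hfd1 : ∀ t ∈ Set.Ico (0 : ℝ) R, HasDerivWithinAt f (f' t) (Set.Ico (0 : ℝ) R) t)
    (hfd2 : ∀ t ∈ Set.Ico (0 : ℝ) R, HasDerivWithinAt f' (f'' t) (Set.Ico (0 : ℝ) R) t)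
    (hfc : ContinuousOn f'' (Set.Ico (0 : ℝ) R))
    (hf0 : f 0 = 0) (hf'0 : f' 0 = -1)
    (hfconv : ConvexOn ℝ (Set.Ico (0 : ℝ) R) f')
    (hfmono : StrictMonoOn f' (Set.Ico (0 : ℝ) R))
    (ν : ℝ) (hν : ν = sSup {u : ℝ | u ∈ Set.Ico (0 : ℝ) R ∧ f' u < 0})
    (ρ : ℝ) (hρ : ρ = sSup {u : ℝ | u ∈ Set.Ioo (0 : ℝ) ν ∧ f u / (u * f' u) - 1 < 1})
    :
    0 < ρ ∧ ∀ t ∈ Set.Ioo (0 : ℝ) ρ, |t - f t / f' t| < t := by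
  have hfC : ContinuousOn f (Set.Ico 0 R) := fun t ht => (hfd1 t ht).continuousWithinAt
  have hf'C : ContinuousOn f' (Set.Ico 0 R) := fun t ht => (hfd2 t ht).continuousWithinAt
  set S : Set ℝ := {u : ℝ | u ∈ Set.Ico (0 : ℝ) R ∧ f' u < 0} with hS
  set T : Set ℝ := {u : ℝ | u ∈ Set.Ioo (0 : ℝ) ν ∧ f u / (u * f' u) - 1 < 1} with hT
  have h0S : (0 : ℝ) ∈ S := ⟨⟨le_refl 0, hR⟩, by rw [hf'0]; norm_num⟩
  have hSbdd : BddAbove S := ⟨R, fun u hu => hu.1.2.le⟩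
  -- facts about points below ν
  have hmem : ∀ t : ℝ, 0 ≤ t → t < ν → t ∈ Set.Ico (0 : ℝ) R ∧ f' t < 0 := by
    intro t ht0 htν
    rw [hν] at htν
    obtain ⟨u, huS, htu⟩ := exists_lt_of_lt_csSup ⟨0, h0S⟩ htν
    have htIco : t ∈ Set.Ico (0 : ℝ) R := ⟨ht0, htu.trans huS.1.2⟩
    rcases eq_or_lt_of_le (le_of_lt htu) with h | h
    · exact ⟨htIco, by rw [show t = u from h]; exact huS.2⟩
    · exact ⟨htIco, (hfmono htIco huS.1 h).trans huS.2⟩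
  -- second derivative positive on (0, R)
  have hf''pos : ∀ t : ℝ, t ∈ Set.Ico (0 : ℝ) R → 0 < t → 0 < f'' t := by
    intro t ht ht0
    have h2 : t / 2 ∈ Set.Ico (0 : ℝ) R := ⟨by linarith, by linarith [ht.2]⟩
    have htan := tangent_line_le hfd2 hfconv ht h2
    have hlt : f' (t / 2) < f' t := hfmono h2 ht (by linarith)
    nlinarith
  -- key integral estimates
  have hkey : ∀ t : ℝ, t ∈ Set.Ico (0 : ℝ) R → 0 < t →
      f t ≤ t * f' t ∧ t * f' t - f t ≤ t ^ 2 * f'' t / 2 := by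
    intro t ht ht0
    have hsub : Set.Icc (0 : ℝ) t ⊆ Set.Ico (0 : ℝ) R :=
      fun s hs => ⟨hs.1, lt_of_le_of_lt hs.2 ht.2⟩
    have hderivAt : ∀ s ∈ Set.Ioo (0 : ℝ) t, HasDerivAt f (f' s) s := by
      intro s hs
      exact (hfd1 s (hsub ⟨hs.1.le, hs.2.le⟩)).hasDerivAt
        (Ico_mem_nhds hs.1 (lt_trans hs.2 ht.2))
    constructor
    · -- f t ≤ t * f' t  via  φ s = f' t * s - f s  monotone on [0,t]
      have hmono1 : MonotoneOn (fun s => f' t * s - f s) (Set.Icc 0 t) := by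
        apply monotoneOn_of_hasDerivWithinAt_nonneg (convex_Icc 0 t)
          (f' := fun s => f' t - f' s)
        · exact (continuousOn_const.mul continuousOn_id).sub (hfC.mono hsub)
        · intro s hs
          rw [interior_Icc] at hs
          exact (((hasDerivAt_id s).const_mul (f' t)).sub (hderivAt s hs)).hasDerivWithinAt.congr_deriv
            (by ring)
        · intro s hs
          rw [interior_Icc] at hs
          have := hfmono (hsub ⟨hs.1.le, hs.2.le⟩) ht hs.2
          linarith
      have := hmono1 (Set.left_mem_Icc.2 ht0.le) (Set.right_mem_Icc.2 ht0.le) ht0.le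
      simp only [hf0] at this
      linarith
    · -- t * f' t - f t ≤ t^2 f'' t / 2
      have hmono2 : MonotoneOn
          (fun s => f s - f' t * s - f'' t * (s ^ 2 / 2 - t * s)) (Set.Icc 0 t) := by
        apply monotoneOn_of_hasDerivWithinAt_nonneg (convex_Icc 0 t)
          (f' := fun s => f' s - f' t - f'' t * (s - t))
        · exact ((hfC.mono hsub).sub (continuousOn_const.mul continuousOn_id)).sub
            (continuousOn_const.mul (Continuous.continuousOn (by continuity)))
        · intro s hs
          rw [interior_Icc] at hs
          have h1 : HasDerivAt (fun s : ℝ => s ^ 2 / 2 - t * s) (s - t) s := by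
            have := ((hasDerivAt_pow 2 s).div_const 2).sub ((hasDerivAt_id s).const_mul t)
            exact this.congr_deriv (by norm_num)
          exact (((hderivAt s hs).sub ((hasDerivAt_id s).const_mul (f' t))).sub
            (h1.const_mul (f'' t))).hasDerivWithinAt.congr_deriv (by ring)
        · intro s hs
          rw [interior_Icc] at hs
          have htan := tangent_line_le hfd2 hfconv ht (hsub ⟨hs.1.le, hs.2.le⟩)
          linarith
      have := hmono2 (Set.left_mem_Icc.2 ht0.le) (Set.right_mem_Icc.2 ht0.le) ht0.le
      simp only [hf0] at this
      nlinarith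
  -- ν is positive
  have hν_pos : 0 < ν := by
    have hc : ContinuousWithinAt f' (Set.Ico 0 R) 0 := hf'C 0 ⟨le_refl 0, hR⟩
    have hev : f' ⁻¹' Set.Iio 0 ∈ nhdsWithin 0 (Set.Ico 0 R) :=
      hc (by rw [hf'0]; exact Iio_mem_nhds (by norm_num))
    rw [Metric.mem_nhdsWithin_iff] at hev
    obtain ⟨ε, hε, hball⟩ := hev
    set u : ℝ := min (ε / 2) (R / 2) with hu
    have hu0 : 0 < u := lt_min (by linarith) (by linarith)
    have huS : u ∈ S := by
      refine ⟨⟨hu0.le, lt_of_le_of_lt (min_le_right _ _) (by linarith)⟩, ?_⟩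
      have hmem' : u ∈ Metric.ball (0:ℝ) ε ∩ Set.Ico 0 R := by
        constructor
        · rw [Metric.mem_ball, Real.dist_eq, sub_zero, abs_of_pos hu0]
          exact lt_of_le_of_lt (min_le_left _ _) (by linarith)
        · exact ⟨hu0.le, lt_of_le_of_lt (min_le_right _ _) (by linarith)⟩
      exact hball hmem'
    rw [hν]
    exact lt_of_lt_of_le hu0 (le_csSup hSbdd huS)
  -- monotonicity of g on (0, ν)
  have hgmono : MonotoneOn (fun x => f x / (x * f' x) - 1) (Set.Ioo 0 ν) := by
    apply monotoneOn_of_hasDerivWithinAt_nonneg (convex_Ioo 0 ν)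
      (f' := fun x => (f' x * (x * f' x) - f x * (1 * f' x + x * f'' x)) / (x * f' x) ^ 2)
    · intro x hx
      obtain ⟨hxIco, hxf'⟩ := hmem x hx.1.le hx.2
      have hne : x * f' x ≠ 0 := ne_of_lt (mul_neg_of_pos_of_neg hx.1 hxf')
      have hfx : HasDerivAt f (f' x) x :=
        (hfd1 x hxIco).hasDerivAt (Ico_mem_nhds hx.1 hxIco.2)
      have hf'x : HasDerivAt f' (f'' x) x :=
        (hfd2 x hxIco).hasDerivAt (Ico_mem_nhds hx.1 hxIco.2)
      exact ((hfx.div ((hasDerivAt_id x).mul hf'x) hne).sub_const 1).continuousAt.continuousWithinAt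
    · intro x hx
      rw [interior_Ioo] at hx
      obtain ⟨hxIco, hxf'⟩ := hmem x hx.1.le hx.2
      have hne : x * f' x ≠ 0 := ne_of_lt (mul_neg_of_pos_of_neg hx.1 hxf')
      have hfx : HasDerivAt f (f' x) x :=
        (hfd1 x hxIco).hasDerivAt (Ico_mem_nhds hx.1 hxIco.2)
      have hf'x : HasDerivAt f' (f'' x) x :=
        (hfd2 x hxIco).hasDerivAt (Ico_mem_nhds hx.1 hxIco.2)
      exact ((hfx.div ((hasDerivAt_id x).mul hf'x) hne).sub_const 1).hasDerivWithinAt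
    · intro x hx
      rw [interior_Ioo] at hx
      obtain ⟨hxIco, hxf'⟩ := hmem x hx.1.le hx.2
      obtain ⟨hk1, hk2⟩ := hkey x hxIco hx.1
      have hc := hf''pos x hxIco hx.1
      apply div_nonneg _ (sq_nonneg _)
      -- numerator nonneg
      rcases le_or_gt 0 (f' x + x * f'' x) with hcase | hcase
      · nlinarith [mul_nonneg (sub_nonneg.2 hk1) hcase,
          mul_pos (mul_pos hx.1 hx.1) (mul_pos hc (neg_pos.2 hxf'))]
      · nlinarith [mul_nonneg (sub_nonneg.2 hk2) (le_of_lt (neg_pos.2 hcase)),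
          mul_nonneg (mul_nonneg (sq_nonneg x) hc.le)
          (by nlinarith [mul_pos hx.1 hc] : (0:ℝ) ≤ x * f'' x - f' x)]
  -- T has a positive element
  have hTbdd : BddAbove T := ⟨ν, fun u hu => hu.1.2.le⟩
  have hu0ex : ∃ u₀ : ℝ, 0 < u₀ ∧ u₀ ∈ T := by
    set B : ℝ := max (f'' 0) 0 + 1 with hB
    have hBpos : 0 < B := by positivity
    have hf''0B : f'' 0 < B := by
      have := le_max_left (f'' 0) 0; linarith
    have hev1 : f'' ⁻¹' Set.Iio B ∈ nhdsWithin 0 (Set.Ico 0 R) :=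
      hfc 0 ⟨le_refl 0, hR⟩ (Iio_mem_nhds hf''0B)
    have hev2 : f' ⁻¹' Set.Iio (-1/2) ∈ nhdsWithin 0 (Set.Ico 0 R) :=
      hf'C 0 ⟨le_refl 0, hR⟩ (by rw [hf'0]; exact Iio_mem_nhds (by norm_num))
    rw [Metric.mem_nhdsWithin_iff] at hev1 hev2
    obtain ⟨ε₁, hε₁, hb1⟩ := hev1
    obtain ⟨ε₂, hε₂, hb2⟩ := hev2
    set u₀ : ℝ := min (min (ε₁ / 2) (ε₂ / 2)) (min (ν / 2) (1 / (2 * B))) with hu₀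
    have hu₀pos : 0 < u₀ := by
      apply lt_min (lt_min (by linarith) (by linarith)) (lt_min (by linarith) (by positivity))
    have hu₀ν : u₀ < ν :=
      lt_of_le_of_lt ((min_le_right _ _).trans (min_le_left _ _)) (by linarith)
    obtain ⟨hu₀Ico, hu₀f'⟩ := hmem u₀ hu₀pos.le hu₀ν
    have hmemball : ∀ ε : ℝ, u₀ < ε → u₀ ∈ Metric.ball (0:ℝ) ε ∩ Set.Ico 0 R := by
      intro ε hε
      exact ⟨by rw [Metric.mem_ball, Real.dist_eq, sub_zero, abs_of_pos hu₀pos]; exact hε, hu₀Ico⟩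
    have hf''u : f'' u₀ < B := hb1 (hmemball ε₁
      (lt_of_le_of_lt ((min_le_left _ _).trans (min_le_left _ _)) (by linarith)))
    have hf'u : f' u₀ < -1/2 := hb2 (hmemball ε₂
      (lt_of_le_of_lt ((min_le_left _ _).trans (min_le_right _ _)) (by linarith)))
    have hu₀B : u₀ * B ≤ 1 / 2 := by
      have h1 : u₀ ≤ 1 / (2 * B) := (min_le_right _ _).trans (min_le_right _ _)
      rw [le_div_iff₀ (by positivity)] at h1
      nlinarith
    have hf''nn : 0 < f'' u₀ := hf''pos u₀ hu₀Ico hu₀pos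
    obtain ⟨hk1, hk2⟩ := hkey u₀ hu₀Ico hu₀pos
    refine ⟨u₀, hu₀pos, ⟨⟨hu₀pos, hu₀ν⟩, ?_⟩⟩
    have hden : u₀ * f' u₀ < 0 := mul_neg_of_pos_of_neg hu₀pos hu₀f'
    rw [sub_lt_iff_lt_add, div_lt_iff_of_neg hden]
    -- need 2 * (u₀ * f' u₀) < f u₀
    nlinarith [mul_lt_mul_of_pos_left hf''u (mul_pos hu₀pos hu₀pos)]
  obtain ⟨u₀, hu₀pos, hu₀T⟩ := hu0ex
  have hρpos : 0 < ρ := by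
    rw [hρ]
    exact lt_of_lt_of_le hu₀pos (le_csSup hTbdd hu₀T)
  refine ⟨hρpos, ?_⟩
  intro t ht
  obtain ⟨u, huT, htu⟩ := exists_lt_of_lt_csSup ⟨u₀, hu₀T⟩ (hρ ▸ ht.2)
  have htν : t < ν := htu.trans huT.1.2
  obtain ⟨htIco, htf'⟩ := hmem t ht.1.le htν
  have hden : t * f' t < 0 := mul_neg_of_pos_of_neg ht.1 htf'
  have hgle : f t / (t * f' t) - 1 ≤ f u / (u * f' u) - 1 :=
    hgmono ⟨ht.1, htν⟩ huT.1 htu.le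
  have h2 : f t / (t * f' t) < 2 := by linarith [huT.2]
  obtain ⟨hk1, _⟩ := hkey t htIco ht.1
  have h1 : 1 ≤ f t / (t * f' t) := by
    rw [le_div_iff_of_neg hden]
    linarith
  have hq : t - f t / f' t = t * (1 - f t / (t * f' t)) := by
    have ht0 : t ≠ 0 := ne_of_gt ht.1
    have hf't0 : f' t ≠ 0 := ne_of_lt htf'
    field_simp
  rw [hq, abs_lt]
  constructor <;> nlinarith
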